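/- If B is a semisimple algebra over a field of characteristic zero and G is a finite group acting on B by algebra automorphisms, then the crossed product algebra B ⋊ G is semisimple. -/

import Mathlib

open scoped TensorProduct

/-- If `B` is a (finite-dimensional) semisimple algebra over a field `K` of
characteristic zero and `G` is a finite group acting on `B` by `K`-algebra automorphisms, then
the crossed product algebra `B ⋊ G` is semisimple.  The crossed product is axiomatized as any
`K`-algebra `C` which is linearly isomorphic to `B ⊗[K] K[G]` with multiplication given on pure
tensors by `(b ⊗ g)(b' ⊗ g') = (b * g • b') ⊗ gg'`. -/
theorem stmt_8 {K : Type*} [Field K] [CharZero K]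
    {B : Type*} [Ring B] [Algebra K B] [FiniteDimensional K B] [IsSemisimpleRing B]
    {G : Type*} [Group G] [Finite G] (ρ : G →* (B ≃ₐ[K] B))
    (C : Type*) [Ring C] [Algebra K C]
    (φ : (B ⊗[K] MonoidAlgebra K G) ≃ₗ[K] C)
    (hφ : ∀ (b b' : B) (g g' : G),
      φ (b ⊗ₜ[K] MonoidAlgebra.single g (1 : K)) * φ (b' ⊗ₜ[K] MonoidAlgebra.single g' (1 : K))
        = φ ((b * ρ g b') ⊗ₜ[K] MonoidAlgebra.single (g * g') (1 : K))) :
    IsSemisimpleRing C := by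
  have _i : Fintype G := Fintype.ofFinite G
  classical
  set e : B → G → C := fun b g => φ (b ⊗ₜ[K] MonoidAlgebra.single g (1 : K)) with he_def
  have he : ∀ (b b' : B) (g g' : G), e b g * e b' g' = e (b * ρ g b') (g * g') := by
    intro b b' g g'; simp only [he_def]; exact hφ b b' g g'
  -- basic algebraic facts about e
  have he_zero : ∀ g : G, e 0 g = 0 := by
    intro g; simp only [he_def, TensorProduct.zero_tmul, map_zero]
  have he_add : ∀ (b b' : B) (g : G), e (b + b') g = e b g + e b' g := by
    intro b b' g; simp only [he_def, TensorProduct.add_tmul, map_add]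
  have he_smul : ∀ (k : K) (b : B) (g : G), e (k • b) g = k • e b g := by
    intro k b g; simp only [he_def, ← TensorProduct.smul_tmul', map_smul]
  have hspan : Submodule.span K (Set.range fun q : B × G => e q.1 q.2) = ⊤ := by
    rw [eq_top_iff]
    rintro x -
    obtain ⟨t, rfl⟩ := φ.surjective x
    have ht : t ∈ (⊤ : Submodule K (B ⊗[K] MonoidAlgebra K G)) := trivial
    rw [← TensorProduct.span_tmul_eq_top] at ht
    induction ht using Submodule.span_induction with
    | mem t h =>
      obtain ⟨b, f, rfl⟩ := h
      induction f using MonoidAlgebra.induction with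
      | zero => simp only [TensorProduct.tmul_zero, map_zero]; exact Submodule.zero_mem _
      | single_add g k f hg hk ih =>
        rw [TensorProduct.tmul_add, map_add]
        refine Submodule.add_mem _ ?_ ih
        have h2 : (MonoidAlgebra.single g k : MonoidAlgebra K G)
            = k • MonoidAlgebra.single g (1 : K) := by
          rw [MonoidAlgebra.smul_single', mul_one]
        rw [h2, TensorProduct.tmul_smul, map_smul]
        exact Submodule.smul_mem _ _ (Submodule.subset_span ⟨(b, g), rfl⟩)
    | zero => simp only [map_zero]; exact Submodule.zero_mem _
    | add x y hx hy ihx ihy => rw [map_add]; exact Submodule.add_mem _ ihx ihy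
    | smul k x hx ih => rw [map_smul]; exact Submodule.smul_mem _ _ ih
  -- the identity of C
  have hone : (1 : C) = e 1 1 := by
    have hleft : ∀ x : C, e 1 1 * x = x := by
      intro x
      have hx : x ∈ Submodule.span K (Set.range fun q : B × G => e q.1 q.2) := by
        rw [hspan]; trivial
      induction hx using Submodule.span_induction with
      | mem x h => obtain ⟨⟨b, g⟩, rfl⟩ := h; simpa using he 1 b 1 g
      | zero => rw [mul_zero]
      | add x y hx hy ihx ihy => rw [mul_add, ihx, ihy]
      | smul k x hx ih => rw [mul_smul_comm, ih]
    have := hleft 1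
    rw [mul_one] at this
    exact this.symm
  have hψ : ∀ b b' : B, e b 1 * e b' 1 = e (b * b') 1 := by
    intro b b'; simpa using he b b' 1 1
  have hu : ∀ g g' : G, e 1 g * e 1 g' = e 1 (g * g') := by
    intro g g'; simpa using he 1 1 g g'
  have hbmul : ∀ (b b' : B) (g : G), e b 1 * e b' g = e (b * b') g := by
    intro b b' g; simpa using he b b' 1 g
  have humul : ∀ (g : G) (b : B) (g' : G), e 1 g * e b g' = e (ρ g b) (g * g') := by
    intro g b g'; simpa using he 1 b g g'
  have hbg : ∀ (b : B) (g h : G), e b g * e 1 h = e b (g * h) := by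
    intro b g h; simpa using he b 1 g h
  have hee : ∀ (b : B) (g : G), e b 1 * e 1 g = e b g := by
    intro b g; simpa using hbg b 1 g
  have hinvinv : ∀ (h : G) (b : B), ρ h (ρ h⁻¹ b) = b := by
    intro h b
    rw [← AlgEquiv.mul_apply, ← map_mul, mul_inv_cancel, map_one, AlgEquiv.one_apply]
  -- B-module structure on C
  let Ψ : B →+* C :=
    { toFun := fun b => e b 1
      map_one' := hone.symm
      map_mul' := fun b b' => (hψ b b').symm
      map_zero' := he_zero 1
      map_add' := fun b b' => he_add b b' 1 }
  letI : Module B C := Module.compHom C Ψ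
  have hBsmul : ∀ (b : B) (x : C), b • x = e b 1 * x := fun _ _ => rfl
  have hKB : ∀ (k : K) (x : C), (algebraMap K B k) • x = k • x := by
    intro k x
    rw [hBsmul]
    have h1 : e (algebraMap K B k) 1 = algebraMap K C k := by
      have : (algebraMap K B k) = k • (1 : B) := (Algebra.algebraMap_eq_smul_one k)
      rw [this, he_smul, ← hone, Algebra.algebraMap_eq_smul_one]
    rw [h1, ← Algebra.smul_def]
  refine { exists_isCompl := fun W => ?_ }
  let W' : Submodule B C :=
    { carrier := W
      add_mem' := fun h h' => W.add_mem h h'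
      zero_mem' := W.zero_mem
      smul_mem' := fun b x hx => by
        show e b 1 * x ∈ W
        rw [← smul_eq_mul]
        exact W.smul_mem _ hx }
  obtain ⟨W'', hc⟩ := exists_isCompl W'
  set π : C →ₗ[B] W' := W'.linearProjOfIsCompl W'' hc with hπ_def
  have hπ_mem : ∀ x : C, (π x : C) ∈ W := fun x => (π x).2
  have hπ_id : ∀ x ∈ W, (π x : C) = x := by
    intro x hx
    have : π x = ⟨x, hx⟩ := Submodule.linearProjOfIsCompl_apply_left hc ⟨x, hx⟩
    rw [this]
  have hπ_smul : ∀ (b : B) (x : C), (π (e b 1 * x) : C) = e b 1 * (π x : C) := by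
    intro b x
    rw [← hBsmul, map_smul]
    rfl
  have hπ_Ksmul : ∀ (k : K) (x : C), (π (k • x) : C) = k • (π x : C) := by
    intro k x
    rw [← hKB, map_smul]
    rw [show ((algebraMap K B k • π x : W') : C) = algebraMap K B k • (π x : C) from rfl, hKB]
  have hn : (Fintype.card G : K) ≠ 0 := Nat.cast_ne_zero.mpr Fintype.card_ne_zero
  set p : C → C := fun x => (Fintype.card G : K)⁻¹ • ∑ g : G, e 1 g * (π (e 1 g⁻¹ * x) : C) with hp_def
  have hWsmulK : ∀ (k : K) (y : C), y ∈ W → k • y ∈ W := by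
    intro k y hy
    rw [Algebra.smul_def, ← smul_eq_mul]
    exact W.smul_mem _ hy
  have hWmul : ∀ (c y : C), y ∈ W → c * y ∈ W := by
    intro c y hy
    rw [← smul_eq_mul]; exact W.smul_mem _ hy
  have hp_mem : ∀ x : C, p x ∈ W := by
    intro x
    refine hWsmulK _ _ (Submodule.sum_mem _ fun g _ => hWmul _ _ (hπ_mem _))
  have hp_id : ∀ x ∈ W, p x = x := by
    intro x hx
    have hterm : ∀ g : G, e 1 g * (π (e 1 g⁻¹ * x) : C) = x := by
      intro g
      rw [hπ_id _ (hWmul _ _ hx), ← mul_assoc, hu, mul_inv_cancel, ← hone, one_mul]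
    simp only [hp_def, hterm, Finset.sum_const, Finset.card_univ]
    rw [← Nat.cast_smul_eq_nsmul K, smul_smul, inv_mul_cancel₀ hn, one_smul]
  have hp_add : ∀ x y : C, p (x + y) = p x + p y := by
    intro x y
    simp only [hp_def, mul_add, map_add, Submodule.coe_add, Finset.sum_add_distrib, smul_add]
  have hp_smul : ∀ (k : K) (x : C), p (k • x) = k • p x := by
    intro k x
    have hterm : ∀ g : G, e 1 g * (π (e 1 g⁻¹ * (k • x)) : C)
        = k • (e 1 g * (π (e 1 g⁻¹ * x) : C)) := by
      intro g
      rw [mul_smul_comm, hπ_Ksmul, mul_smul_comm]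
    simp only [hp_def, hterm, ← Finset.smul_sum]
    rw [smul_comm]
  have hp_zero : p 0 = 0 := by
    have := hp_smul 0 0
    rwa [zero_smul, zero_smul] at this
  have hp_mul : ∀ (c x : C), p (c * x) = c * p x := by
    intro c
    have hcmem : c ∈ Submodule.span K (Set.range fun q : B × G => e q.1 q.2) := by
      rw [hspan]; trivial
    induction hcmem using Submodule.span_induction with
    | mem c h =>
      obtain ⟨⟨b, g⟩, rfl⟩ := h
      intro x
      have key : ∀ h : G, e 1 h * (π (e 1 h⁻¹ * (e b g * x)) : C)
          = e b h * (π (e 1 (h⁻¹ * g) * x) : C) := by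
        intro h
        have h1 : e 1 h⁻¹ * (e b g * x) = e (ρ h⁻¹ b) 1 * (e 1 (h⁻¹ * g) * x) := by
          rw [← mul_assoc, humul, ← hee, mul_assoc]
        rw [h1, hπ_smul, ← mul_assoc, humul, hinvinv, mul_one]
      have key2 : ∀ h : G, e b g * (e 1 h * (π (e 1 h⁻¹ * x) : C))
          = e b (g * h) * (π (e 1 ((g * h)⁻¹ * g) * x) : C) := by
        intro h
        rw [← mul_assoc, hbg]
        congr 3
        simp [mul_inv_rev, mul_assoc]
      calc p (e b g * x)
          = (Fintype.card G : K)⁻¹ • ∑ h : G, e b h * (π (e 1 (h⁻¹ * g) * x) : C) := by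
            simp only [hp_def]
            exact congrArg _ (Finset.sum_congr rfl fun h _ => key h)
        _ = (Fintype.card G : K)⁻¹ • ∑ h : G, e b g * (e 1 h * (π (e 1 h⁻¹ * x) : C)) := by
            congr 1
            exact (Fintype.sum_equiv (Equiv.mulLeft g)
              (fun h => e b g * (e 1 h * (π (e 1 h⁻¹ * x) : C)))
              (fun h => e b h * (π (e 1 (h⁻¹ * g) * x) : C))
              (fun h => by simpa only [Equiv.coe_mulLeft] using key2 h)).symm
        _ = e b g * p x := by
            simp only [hp_def, Finset.mul_sum, mul_smul_comm]
    | zero => intro x; rw [zero_mul, hp_zero, zero_mul]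
    | add c c' hc hc' ihc ihc' =>
      intro x
      rw [add_mul, hp_add, ihc, ihc', add_mul]
    | smul k c hc ih =>
      intro x
      rw [smul_mul_assoc, hp_smul, ih, smul_mul_assoc]
  let P : C →ₗ[C] W :=
    { toFun := fun x => ⟨p x, hp_mem x⟩
      map_add' := fun x y => Subtype.ext (hp_add x y)
      map_smul' := fun c x => Subtype.ext (by simpa [smul_eq_mul] using hp_mul c x) }
  exact ⟨LinearMap.ker P, LinearMap.isCompl_of_proj (f := P)
    (fun w => Subtype.ext (hp_id w w.2))⟩
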